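/- For every positive integer k, there exists a graph G with an orientation D such that the digraph chromatic number χ(D) equals the (undirected) chromatic number χ(G), and both equal k. -/

import Mathlib

variable {V : Type*}

/-- A directed cycle in a digraph `D`, given as an injective map `Fin m → V`
(`m ≥ 2`) whose consecutive images (cyclically) are edges of `D`. -/
def IsCycleFun (D : V → V → Prop) {m : ℕ} (f : Fin m → V) : Prop :=
  2 ≤ m ∧ Function.Injective f ∧ ∀ i : Fin m, D (f i) (f (finRotate m i))

/-- The set `S` contains a directed cycle of `D`. -/
def HasCycleIn (D : V → V → Prop) (S : Set V) : Prop :=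
  ∃ (m : ℕ) (f : Fin m → V), IsCycleFun D f ∧ ∀ i, f i ∈ S

/-- Out-degree of a vertex. -/
noncomputable def outDeg (D : V → V → Prop) (v : V) : ℕ := Nat.card {u | D v u}

/-- In-degree of a vertex. -/
noncomputable def inDeg (D : V → V → Prop) (v : V) : ℕ := Nat.card {u | D u v}

/-- A coloring of the vertices of `D` with no monochromatic directed cycle. -/
def ProperColoring (D : V → V → Prop) {k : ℕ} (c : V → Fin k) : Prop :=
  ∀ (m : ℕ) (f : Fin m → V), IsCycleFun D f → ∃ i j, c (f i) ≠ c (f j)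

/-- The number of proper `k`-colorings of `D` (value of the dichromatic polynomial). -/
noncomputable def numColorings (V : Type*) (D : V → V → Prop) (k : ℕ) : ℕ :=
  Nat.card {c : V → Fin k // ProperColoring D c}

/-- The finset `S` carries a (Hamiltonian on `S`) directed cycle of `D`. -/
def IsCycleSet (D : V → V → Prop) (S : Finset V) : Prop :=
  2 ≤ S.card ∧ ∃ f : Fin S.card ≃ {x // x ∈ S},
    ∀ i, D (f i) (f (finRotate S.card i))

/-- The finset `S` induces exactly a directed cycle of `D`. -/
def IsInducedCycleSet (D : V → V → Prop) (S : Finset V) : Prop :=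
  2 ≤ S.card ∧ ∃ f : Fin S.card ≃ {x // x ∈ S},
    (∀ i, D (f i) (f (finRotate S.card i))) ∧
    ∀ a b : {x // x ∈ S}, D (a : V) b → ∃ i, f i = a ∧ f (finRotate S.card i) = b

/-- `D` has girth `g` : it has a directed cycle of length `g` and no shorter one. -/
def HasGirth (D : V → V → Prop) (g : ℕ) : Prop :=
  (∃ f : Fin g → V, IsCycleFun D f) ∧
    ∀ (m : ℕ) (f : Fin m → V), IsCycleFun D f → g ≤ m



section DichromaticConstruction
open Finset

abbrev Vec (L : ℕ) := Fin L → ZMod 2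

def ipd {L : ℕ} (a b : Vec L) : ZMod 2 := ∑ i, a i * b i

def sg (x : ZMod 2) : ℤ := if x = 0 then 1 else -1

lemma zm2 (x : ZMod 2) : x = 0 ∨ x = 1 := by revert x; decide

lemma sg_add (x y : ZMod 2) : sg (x + y) = sg x * sg y := by revert x y; decide

lemma ipd_comm {L : ℕ} (a b : Vec L) : ipd a b = ipd b a := by
  unfold ipd; exact Finset.sum_congr rfl fun i _ => mul_comm _ _

lemma ipd_add_right {L : ℕ} (a b c : Vec L) : ipd a (b + c) = ipd a b + ipd a c := by
  unfold ipd
  rw [← Finset.sum_add_distrib]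
  exact Finset.sum_congr rfl fun i _ => by simp [Pi.add_apply, mul_add]

lemma orth {L : ℕ} (d : Vec L) (hd : d ≠ 0) : ∑ a : Vec L, sg (ipd a d) = 0 := by
  have hx : ∃ i, d i ≠ 0 := by
    by_contra h
    push_neg at h
    exact hd (funext fun i => h i)
  obtain ⟨i₀, hi₀⟩ := hx
  have hdi : d i₀ = 1 := (zm2 (d i₀)).resolve_left hi₀
  set δ : Vec L := Pi.single i₀ 1 with hδ
  have hipδ : ∀ a : Vec L, ipd (a + δ) d = ipd a d + 1 := by
    intro a
    have : ipd δ d = 1 := by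
      unfold ipd
      rw [Finset.sum_eq_single i₀]
      · simp [hδ, hdi]
      · intro b _ hb; simp [hδ, Pi.single_eq_of_ne hb]
      · simp
    calc ipd (a + δ) d = ipd d (a + δ) := ipd_comm _ _
      _ = ipd d a + ipd d δ := ipd_add_right _ _ _
      _ = ipd a d + 1 := by rw [ipd_comm d a, ipd_comm d δ, this]
  apply Finset.sum_ninvolution (g := fun a => a + δ)
  · intro a
    rw [hipδ a]
    rcases zm2 (ipd a d) with h | h <;> simp [h, sg, show (1:ZMod 2)+1 = 0 from by decide]
  · intro a _
    intro h
    have := congrFun h i₀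
    simp [hδ] at this
  · intro a; exact Finset.mem_univ _
  · intro a
    funext i
    by_cases hi : i = i₀
    · subst hi; simp [hδ, show ∀ x : ZMod 2, x + 1 + 1 = x by decide]
    · simp [hδ, Pi.single_eq_of_ne hi]

lemma card_vec (L : ℕ) : Fintype.card (Vec L) = 2 ^ L := by
  simp [Fintype.card_fun]

lemma orth_full {L : ℕ} (d : Vec L) :
    ∑ a : Vec L, sg (ipd a d) = if d = 0 then ((2:ℤ) ^ L) else 0 := by
  by_cases h : d = 0
  · subst h
    have h1 : ∀ a : Vec L, ipd a (0 : Vec L) = 0 := by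
      intro a; unfold ipd; simp
    simp only [h1, sg, if_pos rfl, if_pos]
    rw [Finset.sum_const, card_univ, card_vec]
    simp
  · simp [h, orth d h]

lemma lindsey {L : ℕ} (R C : Finset (Vec L)) (e : ZMod 2)
    (hconst : ∀ a ∈ R, ∀ b ∈ C, ipd a b = e) (hcard : R.card = C.card) :
    R.card ^ 2 ≤ 2 ^ L := by
  rcases Nat.eq_zero_or_pos R.card with h0 | hpos
  · simp [h0]
  set t : ℤ := (R.card : ℤ) with ht
  have htpos : (0:ℤ) < t := by rw [ht]; exact_mod_cast hpos
  set F : Vec L → ℤ := fun a => ∑ b ∈ C, sg (ipd a b) with hF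
  have hFR : ∀ a ∈ R, F a = t * sg e := by
    intro a ha
    have h1 : F a = ∑ _b ∈ C, sg e :=
      Finset.sum_congr rfl (fun b hb => by rw [hconst a ha b hb])
    rw [h1, Finset.sum_const, nsmul_eq_mul, ← hcard, ht]
  have hsumR : ∑ a ∈ R, F a = t * (t * sg e) := by
    rw [Finset.sum_congr rfl hFR, Finset.sum_const]
    simp [ht]
  -- Cauchy-Schwarz
  have hCS : (∑ a ∈ R, F a) ^ 2 ≤ t * ∑ a ∈ R, F a ^ 2 := by
    have := Finset.sum_mul_sq_le_sq_mul_sq R (fun _ => (1:ℤ)) F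
    simpa [ht] using this
  have hsub : ∑ a ∈ R, F a ^ 2 ≤ ∑ a : Vec L, F a ^ 2 :=
    Finset.sum_le_univ_sum_of_nonneg fun a => sq_nonneg _
  have htotal : ∑ a : Vec L, F a ^ 2 = t * 2 ^ L := by
    have expand : ∀ a : Vec L, F a ^ 2 = ∑ b ∈ C, ∑ b' ∈ C, sg (ipd a (b + b')) := by
      intro a
      rw [sq, hF]
      simp only []
      rw [Finset.sum_mul_sum]
      exact Finset.sum_congr rfl fun b _ => Finset.sum_congr rfl fun b' _ => by
        rw [← sg_add, ← ipd_add_right]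
    calc ∑ a : Vec L, F a ^ 2
        = ∑ a : Vec L, ∑ b ∈ C, ∑ b' ∈ C, sg (ipd a (b + b')) :=
          Finset.sum_congr rfl fun a _ => expand a
      _ = ∑ b ∈ C, ∑ b' ∈ C, ∑ a : Vec L, sg (ipd a (b + b')) := by
          rw [Finset.sum_comm]
          exact Finset.sum_congr rfl fun b _ => Finset.sum_comm
      _ = ∑ b ∈ C, ∑ b' ∈ C, if b + b' = 0 then ((2:ℤ)^L) else 0 :=
          Finset.sum_congr rfl fun b _ => Finset.sum_congr rfl fun b' _ => orth_full _
      _ = ∑ b ∈ C, ∑ b' ∈ C, if b' = b then ((2:ℤ)^L) else 0 := by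
          refine Finset.sum_congr rfl fun b _ => Finset.sum_congr rfl fun b' _ => ?_
          refine if_congr ?_ rfl rfl
          constructor
          · intro h
            funext i
            have h2 : b i + b' i = 0 := by simpa using congrFun h i
            revert h2
            generalize b i = x; generalize b' i = y
            revert x y; decide
          · rintro rfl
            funext i
            exact (show ∀ x : ZMod 2, x + x = 0 by decide) _
      _ = ∑ _b ∈ C, ((2:ℤ)^L) := Finset.sum_congr rfl fun b hb =>
            (Finset.sum_ite_eq' C b _).trans (if_pos hb)
      _ = t * 2 ^ L := by rw [Finset.sum_const, nsmul_eq_mul, ← hcard, ht]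
  have hsq : (∑ a ∈ R, F a) ^ 2 = t^2 * t^2 := by
    rw [hsumR]
    rcases zm2 e with h | h <;> simp [h, sg] <;> ring
  have chain : t^2 * t^2 ≤ t * (t * 2 ^ L) := by
    rw [← hsq]
    calc (∑ a ∈ R, F a)^2 ≤ t * ∑ a ∈ R, F a ^ 2 := hCS
      _ ≤ t * ∑ a : Vec L, F a ^ 2 := by
          exact mul_le_mul_of_nonneg_left hsub htpos.le
      _ = t * (t * 2 ^ L) := by rw [htotal]
  have ht2 : t^2 ≤ 2 ^ L := by
    have h' : t * t * (t*t) ≤ t * t * (2^L) := by ring_nf; ring_nf at chain; linarith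
    have := le_of_mul_le_mul_left h' (by positivity : (0:ℤ) < t * t)
    calc t^2 = t * t := sq t
      _ ≤ 2 ^ L := this
  have ht2' : ((R.card : ℤ))^2 ≤ (2:ℤ)^L := by rw [← ht]; exact ht2
  exact_mod_cast ht2'

lemma crossing {q : ℕ} (R C : Finset (Vec (2*q)))
    (hR : 2*(2^q+1) ≤ R.card) (hC : 2*(2^q+1) ≤ C.card) :
    ∃ a ∈ R, ∃ a' ∈ R, ∃ b ∈ C, ∃ b' ∈ C,
      ipd a b = 1 ∧ ipd a' b = 0 ∧ ipd a' b' = 1 ∧ ipd a b' = 0 := by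
  by_contra hcon
  push_neg at hcon
  set τ := 2^q + 1 with hτ
  have hqpos : 0 < 2^q := Nat.pow_pos (by norm_num)
  have hτsq : 2^(2*q) < τ^2 := by
    have h2 : 2^(2*q) = 2^q * 2^q := by rw [two_mul, pow_add]
    have h3 : τ^2 = 2^q * 2^q + 2*2^q + 1 := by rw [hτ]; ring
    omega
  have comp : ∀ a ∈ R, ∀ a' ∈ R,
      (∀ b ∈ C, ipd a b = 1 → ipd a' b = 1) ∨ (∀ b ∈ C, ipd a' b = 1 → ipd a b = 1) := by
    intro a ha a' ha'
    by_contra h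
    push_neg at h
    obtain ⟨⟨b, hb, hab1, hab2⟩, ⟨b', hb', h1', h2'⟩⟩ := h
    exact hcon a ha a' ha' b hb b' hb' hab1 ((zm2 _).resolve_right hab2) h1'
      ((zm2 _).resolve_right h2')
  set w : Vec (2*q) → ℕ := fun a => #(C.filter (fun b => ipd a b = 1)) with hw
  set H := R.filter (fun a => τ ≤ w a) with hH
  set Lo := R.filter (fun a => w a ≤ C.card - τ) with hLo
  have hcover : R ⊆ H ∪ Lo := by
    intro a ha
    rcases le_or_gt τ (w a) with h | h
    · exact mem_union_left _ (mem_filter.2 ⟨ha, h⟩)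
    · exact mem_union_right _ (mem_filter.2 ⟨ha, by omega⟩)
  have hcase : τ ≤ H.card ∨ τ ≤ Lo.card := by
    by_contra h
    push_neg at h
    have h1 := (Finset.card_le_card hcover).trans (Finset.card_union_le H Lo)
    omega
  rcases hcase with hbig | hbig
  · obtain ⟨R', hR'sub, hR'card⟩ := Finset.exists_subset_card_eq hbig
    have hR'R : R' ⊆ R := hR'sub.trans (Finset.filter_subset _ _)
    have hne : R'.Nonempty := by rw [← Finset.card_pos, hR'card]; omega
    obtain ⟨a₀, ha₀, hmin⟩ := Finset.exists_min_image R' w hne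
    have hdom : ∀ a ∈ R', ∀ b ∈ C, ipd a₀ b = 1 → ipd a b = 1 := by
      intro a ha b hb h1
      rcases comp a₀ (hR'R ha₀) a (hR'R ha) with h | h
      · exact h b hb h1
      · have hsub2 : C.filter (fun x => ipd a x = 1) ⊆ C.filter (fun x => ipd a₀ x = 1) := by
          intro x hx
          rw [mem_filter] at hx ⊢
          exact ⟨hx.1, h x hx.1 hx.2⟩
        have heq : C.filter (fun x => ipd a x = 1) = C.filter (fun x => ipd a₀ x = 1) :=
          Finset.eq_of_subset_of_card_le hsub2 (hmin a ha)
        have hbmem : b ∈ C.filter (fun x => ipd a x = 1) := by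
          rw [heq, mem_filter]; exact ⟨hb, h1⟩
        exact (mem_filter.1 hbmem).2
    have hC1 : τ ≤ #(C.filter (fun x => ipd a₀ x = 1)) := (Finset.mem_filter.1 (hR'sub ha₀)).2
    obtain ⟨C', hC'sub, hC'card⟩ := Finset.exists_subset_card_eq hC1
    have key := lindsey R' C' 1 (fun a ha b hb => by
      have hbC1 := hC'sub hb
      rw [mem_filter] at hbC1
      exact hdom a ha b hbC1.1 hbC1.2) (by rw [hR'card, hC'card])
    rw [hR'card] at key
    omega
  · obtain ⟨R', hR'sub, hR'card⟩ := Finset.exists_subset_card_eq hbig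
    have hR'R : R' ⊆ R := hR'sub.trans (Finset.filter_subset _ _)
    have hne : R'.Nonempty := by rw [← Finset.card_pos, hR'card]; omega
    obtain ⟨a₁, ha₁, hmax⟩ := Finset.exists_max_image R' w hne
    have hdom : ∀ a ∈ R', ∀ b ∈ C, ipd a b = 1 → ipd a₁ b = 1 := by
      intro a ha b hb h1
      rcases comp a (hR'R ha) a₁ (hR'R ha₁) with h | h
      · exact h b hb h1
      · have hsub2 : C.filter (fun x => ipd a₁ x = 1) ⊆ C.filter (fun x => ipd a x = 1) := by
          intro x hx
          rw [mem_filter] at hx ⊢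
          exact ⟨hx.1, h x hx.1 hx.2⟩
        have heq : C.filter (fun x => ipd a₁ x = 1) = C.filter (fun x => ipd a x = 1) :=
          Finset.eq_of_subset_of_card_le hsub2 (hmax a ha)
        have hbmem : b ∈ C.filter (fun x => ipd a₁ x = 1) := by
          rw [heq, mem_filter]; exact ⟨hb, h1⟩
        exact (mem_filter.1 hbmem).2
    have hwa₁ : w a₁ ≤ C.card - τ := (Finset.mem_filter.1 (hR'sub ha₁)).2
    have hsplit : #(C.filter (fun b => ipd a₁ b = 1)) + #(C.filter (fun b => ¬ (ipd a₁ b = 1))) = #C :=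
      Finset.card_filter_add_card_filter_not _
    have hC0 : τ ≤ #(C.filter (fun b => ¬ (ipd a₁ b = 1))) := by
      have : w a₁ = #(C.filter (fun b => ipd a₁ b = 1)) := rfl
      omega
    obtain ⟨C', hC'sub, hC'card⟩ := Finset.exists_subset_card_eq hC0
    have key := lindsey R' C' 0 (fun a ha b hb => by
      have hbC0 := hC'sub hb
      rw [mem_filter] at hbC0
      by_contra hne1
      have h1 : ipd a b = 1 := (zm2 _).resolve_left hne1
      exact hbC0.2 (hdom a ha b hbC0.1 h1)) (by rw [hR'card, hC'card])
    rw [hR'card] at key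
    omega

def Dig (k L : ℕ) : (Fin k × Vec L) → (Fin k × Vec L) → Prop :=
  fun u v => u.1 ≠ v.1 ∧ ipd u.2 v.2 = (if u.1 < v.1 then 1 else 0)

lemma mono_cycle_false {L k jn : ℕ} {c : Fin k × Vec L → Fin jn} {t : Fin jn}
    (hc : ProperColoring (Dig k L) c) {i i' : Fin k} (hlt : i < i')
    {a a' b b' : Vec L} (hab : ipd a b = 1) (ha'b : ipd a' b = 0)
    (ha'b' : ipd a' b' = 1) (hab' : ipd a b' = 0)
    (hca : c (i,a) = t) (hca' : c (i,a') = t) (hcb : c (i',b) = t)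
    (hcb' : c (i',b') = t) : False := by
  have hii' : i ≠ i' := hlt.ne
  have hane : a ≠ a' := by
    intro h; rw [h, ha'b] at hab; exact one_ne_zero hab.symm
  have hbne : b ≠ b' := by
    intro h; rw [h, hab'] at hab; exact one_ne_zero hab.symm
  have h01 : ((i,a) : Fin k × Vec L) ≠ (i',b) := by simp [Prod.ext_iff]; intro h; exact absurd h hii'
  have h02 : ((i,a) : Fin k × Vec L) ≠ (i,a') := by simp [Prod.ext_iff, hane]
  have h03 : ((i,a) : Fin k × Vec L) ≠ (i',b') := by simp [Prod.ext_iff]; intro h; exact absurd h hii'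
  have h12 : ((i',b) : Fin k × Vec L) ≠ (i,a') := by simp [Prod.ext_iff]; intro h; exact absurd h hii'.symm
  have h13 : ((i',b) : Fin k × Vec L) ≠ (i',b') := by simp [Prod.ext_iff, hbne]
  have h23 : ((i,a') : Fin k × Vec L) ≠ (i',b') := by simp [Prod.ext_iff]; intro h; exact absurd h hii'
  have hd0 : Dig k L (i,a) (i',b) := ⟨hii', by rw [if_pos hlt]; exact hab⟩
  have hd1 : Dig k L (i',b) (i,a') := ⟨hii'.symm, by rw [if_neg (asymm hlt), ipd_comm]; exact ha'b⟩
  have hd2 : Dig k L (i,a') (i',b') := ⟨hii', by rw [if_pos hlt]; exact ha'b'⟩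
  have hd3 : Dig k L (i',b') (i,a) := ⟨hii'.symm, by rw [if_neg (asymm hlt), ipd_comm]; exact hab'⟩
  have hcyc : IsCycleFun (Dig k L) ![(i,a),(i',b),(i,a'),(i',b')] := by
    refine ⟨by norm_num, ?_, ?_⟩
    · intro z y hzy
      fin_cases z <;> fin_cases y <;>
        first
          | rfl
          | exact absurd hzy h01
          | exact absurd hzy h02
          | exact absurd hzy h03
          | exact absurd hzy h12
          | exact absurd hzy h13
          | exact absurd hzy h23
          | exact absurd hzy.symm h01
          | exact absurd hzy.symm h02
          | exact absurd hzy.symm h03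
          | exact absurd hzy.symm h12
          | exact absurd hzy.symm h13
          | exact absurd hzy.symm h23
    · intro z
      fin_cases z
      · exact hd0
      · exact hd1
      · exact hd2
      · exact hd3
  obtain ⟨z, y, hzy⟩ := hc 4 _ hcyc
  apply hzy
  have hall : ∀ z : Fin 4, c (![(i,a),(i',b),(i,a'),(i',b')] z) = t := by
    intro z
    fin_cases z
    · exact hca
    · exact hcb
    · exact hca'
    · exact hcb'
  rw [hall z, hall y]

lemma numeric (k : ℕ) (hk : 0 < k) : 2*k*k*(2^(2*k+3)+1) < 2^(2*(2*k+3)) := by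
  have hx : k ≤ 2^k := (Nat.lt_two_pow_self (n := k)).le
  have hx1 : 1 ≤ 2^k := Nat.one_le_two_pow
  set x := 2^k with hxd
  have he : 2*k+3 = k+(k+3) := by omega
  have h1 : (2:ℕ)^(2*k+3) = x*(x*8) := by rw [he, pow_add, pow_add]; norm_num; rfl
  have h2 : (2:ℕ)^(2*(2*k+3)) = (x*(x*8))*(x*(x*8)) := by rw [two_mul, pow_add, h1]
  have hstep : 2*k*k*(x*(x*8)+1) ≤ 2*x*x*(x*(x*8)+1) := by
    apply Nat.mul_le_mul_right
    exact Nat.mul_le_mul (Nat.mul_le_mul_left 2 hx) hx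
  calc 2*k*k*(2^(2*k+3)+1) = 2*k*k*(x*(x*8)+1) := by rw [h1]
    _ ≤ 2*x*x*(x*(x*8)+1) := hstep
    _ < (x*(x*8))*(x*(x*8)) := by
        have hxx : 1 ≤ x*x := Nat.one_le_iff_ne_zero.2 (by positivity)
        nlinarith [hxx, Nat.mul_le_mul hxx hxx]
    _ = 2^(2*(2*k+3)) := h2.symm

theorem stmt_11 (k : ℕ) (hk : 0 < k) :
    ∃ (W : Type) (_ : Fintype W) (G : SimpleGraph W) (D : W → W → Prop),
      (∀ a b, G.Adj a b ↔ (D a b ∨ D b a)) ∧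
      (∀ a b, ¬ (D a b ∧ D b a)) ∧
      G.chromaticNumber = (k : ℕ∞) ∧
      (∃ c : W → Fin k, ProperColoring D c) ∧
      (∀ j : ℕ, (∃ c : W → Fin j, ProperColoring D c) → k ≤ j) := by
  set q : ℕ := 2*k+3 with hq
  set L : ℕ := 2*q with hL
  set n : ℕ := 2^L with hn
  set G : SimpleGraph (Fin k × Vec L) :=
    ⟨fun u v => u.1 ≠ v.1, ⟨fun u v h => Ne.symm h⟩, ⟨fun u h => h rfl⟩⟩ with hG
  refine ⟨Fin k × Vec L, inferInstance, G, Dig k L, ?_, ?_, ?_, ?_, ?_⟩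
  · intro u v
    show u.1 ≠ v.1 ↔ _
    constructor
    · intro h
      rcases lt_or_gt_of_ne h with hlt | hgt
      · rcases zm2 (ipd u.2 v.2) with h0 | h1
        · right
          exact ⟨h.symm, by rw [if_neg (asymm hlt), ipd_comm]; exact h0⟩
        · left; exact ⟨h, by rw [if_pos hlt]; exact h1⟩
      · rcases zm2 (ipd u.2 v.2) with h0 | h1
        · left; exact ⟨h, by rw [if_neg (asymm hgt)]; exact h0⟩
        · right; exact ⟨h.symm, by rw [if_pos hgt, ipd_comm]; exact h1⟩
    · rintro (⟨h, -⟩ | ⟨h, -⟩)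
      · exact h
      · exact h.symm
  · rintro u v ⟨⟨hne, h1⟩, ⟨-, h2⟩⟩
    rcases lt_or_gt_of_ne hne with hlt | hgt
    · rw [if_pos hlt] at h1
      rw [if_neg (asymm hlt), ipd_comm] at h2
      rw [h1] at h2; exact one_ne_zero h2
    · rw [if_neg (asymm hgt)] at h1
      rw [if_pos hgt, ipd_comm] at h2
      rw [h1] at h2; exact zero_ne_one h2
  · have hcol : G.Colorable k :=
      ⟨⟨fun w => w.1, fun {u v} h => h⟩⟩
    have hclique : G.IsClique
        (Finset.image (fun i : Fin k => ((i, (0:Vec L)) : Fin k × Vec L)) univ) := by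
      intro u hu v hv huv
      simp only [coe_image, Set.mem_image] at hu hv
      obtain ⟨i, -, rfl⟩ := hu
      obtain ⟨i', -, rfl⟩ := hv
      show i ≠ i'
      intro h; exact huv (by rw [h])
    have hcard : (Finset.image (fun i : Fin k => ((i,(0:Vec L)) : Fin k × Vec L)) univ).card
        = k := by
      rw [Finset.card_image_of_injective _
        (fun a b hab => (Prod.ext_iff.1 hab).1), card_univ, Fintype.card_fin]
    have hlow := hclique.card_le_chromaticNumber
    rw [hcard] at hlow
    exact le_antisymm hcol.chromaticNumber_le hlow
  · refine ⟨fun w => w.1, ?_⟩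
    rintro m f ⟨hm, hinj, hD⟩
    have i0 : Fin m := ⟨0, by omega⟩
    exact ⟨i0, finRotate m i0, (hD i0).1⟩
  · rintro j ⟨c, hc⟩
    by_contra hjk
    push_neg at hjk
    have hqpos : 0 < 2^q := Nat.pow_pos (by norm_num)
    have hnpos : 0 < n := Nat.pow_pos (by norm_num)
    have hj1 : 1 ≤ j := by
      rcases Nat.eq_zero_or_pos j with rfl | h
      · exact (c (⟨0, hk⟩, 0)).elim0
      · exact h
    have hcardW : Fintype.card (Fin k × Vec L) = k * n := by
      rw [Fintype.card_prod, Fintype.card_fin, card_vec, hn]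
    have hsum : ∑ t : Fin j, #(univ.filter (fun w : Fin k × Vec L => c w = t)) = k * n := by
      rw [← hcardW, ← card_univ]
      exact (Finset.card_eq_sum_card_fiberwise (fun x _ => mem_univ (c x))).symm
    have hfiber : ∃ t : Fin j,
        k * n ≤ j * #(univ.filter (fun w : Fin k × Vec L => c w = t)) := by
      by_contra hno
      push_neg at hno
      have hsum2 : ∑ t : Fin j, j * #(univ.filter (fun w : Fin k × Vec L => c w = t))
          = j * (k*n) := by rw [← Finset.mul_sum, hsum]
      have hle : ∑ t : Fin j, j * #(univ.filter (fun w : Fin k × Vec L => c w = t))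
          ≤ ∑ _t : Fin j, (k*n - 1) :=
        Finset.sum_le_sum fun t _ => by have := hno t; omega
      rw [Finset.sum_const, card_univ, Fintype.card_fin, smul_eq_mul, hsum2] at hle
      have hkn : 0 < k*n := by positivity
      have h3 := Nat.le_of_mul_le_mul_left hle (by omega : 0 < j)
      omega
    obtain ⟨t, hbig⟩ := hfiber
    set Rp : Fin k → Finset (Vec L) := fun i => univ.filter (fun v => c (i, v) = t) with hRp
    have hpart : #(univ.filter (fun w : Fin k × Vec L => c w = t)) = ∑ i : Fin k, #(Rp i) := by
      rw [Finset.card_eq_sum_card_fiberwise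
        (f := fun w : Fin k × Vec L => w.1) (t := univ) (fun x _ => mem_univ x.1)]
      refine Finset.sum_congr rfl fun i _ => ?_
      refine Finset.card_bij' (fun w _ => w.2) (fun v _ => (i, v)) ?_ ?_ ?_ ?_
      · intro w hw
        simp only [mem_filter, mem_univ, true_and] at hw ⊢
        rw [hRp]
        simp only [mem_filter, mem_univ, true_and]
        have : (i, w.2) = w := by
          rw [← hw.2]
        rw [this]
        exact hw.1
      · intro v hv
        rw [hRp] at hv
        simp only [mem_filter, mem_univ, true_and] at hv ⊢
        exact ⟨hv, trivial⟩
      · intro w hw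
        simp only [mem_filter] at hw
        exact Prod.ext hw.2.symm rfl
      · intro v hv
        rfl
    have hone : ∀ i ∈ univ.filter (fun i : Fin k => 2*(2^q+1) ≤ #(Rp i)),
        ∀ i' ∈ univ.filter (fun i : Fin k => 2*(2^q+1) ≤ #(Rp i)), i = i' := by
      intro i hi i' hi'
      rw [mem_filter] at hi hi'
      by_contra hne
      have hmem : ∀ (i₀ : Fin k) (v : Vec L), v ∈ Rp i₀ → c (i₀, v) = t := by
        intro i₀ v hv
        rw [hRp] at hv
        exact (mem_filter.1 hv).2
      rcases lt_or_gt_of_ne hne with hlt | hlt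
      · obtain ⟨a, ha, a', ha', b, hb, b', hb', hp1, hp2, hp3, hp4⟩ :=
          crossing (Rp i) (Rp i') hi.2 hi'.2
        exact mono_cycle_false hc hlt hp1 hp2 hp3 hp4
          (hmem i a ha) (hmem i a' ha') (hmem i' b hb) (hmem i' b' hb')
      · obtain ⟨a, ha, a', ha', b, hb, b', hb', hp1, hp2, hp3, hp4⟩ :=
          crossing (Rp i') (Rp i) hi'.2 hi.2
        exact mono_cycle_false hc hlt hp1 hp2 hp3 hp4
          (hmem i' a ha) (hmem i' a' ha') (hmem i b hb) (hmem i b' hb')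
    have hRle : ∀ i, #(Rp i) ≤ n := by
      intro i
      calc #(Rp i) ≤ #(univ : Finset (Vec L)) := card_le_card (filter_subset _ _)
        _ = n := by rw [card_univ, card_vec]
    set B := univ.filter (fun i : Fin k => 2*(2^q+1) ≤ #(Rp i)) with hB
    have hBone : #B ≤ 1 := Finset.card_le_one.2 (fun i hi i' hi' => hone i hi i' hi')
    have hsplit : ∑ i : Fin k, #(Rp i) =
        ∑ i ∈ B, #(Rp i)
          + ∑ i ∈ univ.filter (fun i : Fin k => ¬ (2*(2^q+1) ≤ #(Rp i))), #(Rp i) :=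
      (Finset.sum_filter_add_sum_filter_not univ _ _).symm
    have h1 : ∑ i ∈ B, #(Rp i) ≤ n := by
      calc ∑ i ∈ B, #(Rp i) ≤ ∑ _i ∈ B, n := Finset.sum_le_sum fun i _ => hRle i
        _ = #B * n := by rw [Finset.sum_const, smul_eq_mul]
        _ ≤ 1 * n := Nat.mul_le_mul_right n hBone
        _ = n := one_mul n
    have h2 : ∑ i ∈ univ.filter (fun i : Fin k => ¬ (2*(2^q+1) ≤ #(Rp i))), #(Rp i)
        ≤ k * (2*(2^q+1)) := by
      calc ∑ i ∈ univ.filter (fun i : Fin k => ¬ (2*(2^q+1) ≤ #(Rp i))), #(Rp i)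
          ≤ ∑ _i ∈ univ.filter (fun i : Fin k => ¬ (2*(2^q+1) ≤ #(Rp i))), (2*(2^q+1)) :=
            Finset.sum_le_sum fun i hi => by
              rw [mem_filter] at hi
              omega
        _ = #(univ.filter (fun i : Fin k => ¬ (2*(2^q+1) ≤ #(Rp i)))) * (2*(2^q+1)) := by
            rw [Finset.sum_const, smul_eq_mul]
        _ ≤ k * (2*(2^q+1)) := by
            apply Nat.mul_le_mul_right
            calc #(univ.filter (fun i : Fin k => ¬ (2*(2^q+1) ≤ #(Rp i))))
                ≤ #(univ : Finset (Fin k)) := card_le_card (filter_subset _ _)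
              _ = k := by rw [card_univ, Fintype.card_fin]
    have hSle : #(univ.filter (fun w : Fin k × Vec L => c w = t)) ≤ n + k*(2*(2^q+1)) := by
      rw [hpart, hsplit]
      omega
    obtain ⟨k', rfl⟩ : ∃ k', k = k'+1 := ⟨k-1, by omega⟩
    have hchain : (k'+1) * n ≤ k' * (n + (k'+1)*(2*(2^q+1))) := by
      calc (k'+1)*n ≤ j * #(univ.filter (fun w : Fin (k'+1) × Vec L => c w = t)) := hbig
        _ ≤ k' * #(univ.filter (fun w : Fin (k'+1) × Vec L => c w = t)) :=
            Nat.mul_le_mul_right _ (by omega)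
        _ ≤ k' * (n + (k'+1)*(2*(2^q+1))) := Nat.mul_le_mul_left _ hSle
    have hfin : n ≤ 2*(k'+1)*(k'+1)*(2^q+1) := by
      have hexp : (k'+1)*n = k'*n + n := by ring
      have hexp2 : k' * (n + (k'+1)*(2*(2^q+1))) = k'*n + k'*((k'+1)*(2*(2^q+1))) := by ring
      rw [hexp, hexp2] at hchain
      have h3 : n ≤ k'*((k'+1)*(2*(2^q+1))) := le_of_add_le_add_left hchain
      calc n ≤ k'*((k'+1)*(2*(2^q+1))) := h3
        _ ≤ (k'+1)*((k'+1)*(2*(2^q+1))) :=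
            Nat.mul_le_mul_right _ (Nat.le_succ k')
        _ = 2*(k'+1)*(k'+1)*(2^q+1) := by ring
    have hnum := numeric (k'+1) (Nat.succ_pos k')
    rw [← hq] at hnum
    rw [hn, hL] at hfin
    omega

end DichromaticConstruction
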